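/- Let G = (V, E) be a finite bipartite simple graph without isolated vertices. Then G is a unique key graph if and only if E is a perfect matching of G, i.e. every vertex of G has degree exactly one. -/

import Mathlib

open scoped Classical

variable {V : Type*} [Fintype V] [DecidableEq V]

/-- A Sperner hypergraph: no hyperedge contains another one. -/
def SpernerFam (𝓑 : Set (Finset V)) : Prop :=
  ∀ B₁ ∈ 𝓑, ∀ B₂ ∈ 𝓑, B₁ ⊆ B₂ → B₁ = B₂

/-- `T` is a transversal of `𝓑` if it meets every hyperedge. -/
def IsTransversal (𝓑 : Set (Finset V)) (T : Finset V) : Prop :=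
  ∀ B ∈ 𝓑, (T ∩ B).Nonempty

/-- `𝓑^d`: the family of inclusion-minimal transversals of `𝓑`. -/
def dualHyp (𝓑 : Set (Finset V)) : Set (Finset V) :=
  {T | IsTransversal 𝓑 T ∧ ∀ T', IsTransversal 𝓑 T' → T' ⊆ T → T' = T}

/-- A Boolean function `h` on `V` is pure Horn if its set of true assignments contains the
all-true assignment and is closed under componentwise AND. -/
def PureHorn (h : (V → Bool) → Bool) : Prop :=
  h (fun _ => true) = true ∧
  ∀ x y : V → Bool, h x = true → h y = true → h (fun v => x v && y v) = true

/-- The clause `A → v` is an implicate of `h`: every true assignment of `h` that is true on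
every element of `A` is also true at `v`. -/
def Implicate (h : (V → Bool) → Bool) (A : Finset V) (v : V) : Prop :=
  ∀ x : V → Bool, h x = true → (∀ a ∈ A, x a = true) → x v = true

/-- `K` is a key of `h` if `K → v` is an implicate of `h` for every `v ∈ V \ K`. -/
def IsKey (h : (V → Bool) → Bool) (K : Finset V) : Prop :=
  ∀ v ∉ K, Implicate h K v

/-- `𝒦(h)`: the family of inclusion-minimal keys of `h`. -/
def minKeys (h : (V → Bool) → Bool) : Set (Finset V) :=
  {K | IsKey h K ∧ ∀ K', IsKey h K' → K' ⊆ K → K' = K}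

/-- `Φ_𝓑`: the pure Horn function whose true assignments are exactly those `x` such that for
every `B ∈ 𝓑` on which `x` is identically true, `x` is identically true on all of `V`. -/
noncomputable def PhiB (𝓑 : Set (Finset V)) : (V → Bool) → Bool :=
  fun x => decide (∀ B ∈ 𝓑, (∀ u ∈ B, x u = true) → ∀ v : V, x v = true)

/-- `𝓑` is a unique key hypergraph: `Φ_𝓑` is the unique pure Horn function `h`
with `𝒦(h) = 𝓑`. -/
def UniqueKeyHypergraph (𝓑 : Set (Finset V)) : Prop :=
  minKeys (PhiB 𝓑) = 𝓑 ∧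
  ∀ h : (V → Bool) → Bool, PureHorn h → minKeys h = 𝓑 → h = PhiB 𝓑

/-- The edge set of a simple graph viewed as a hypergraph of two-element sets. -/
def edgeFam (G : SimpleGraph V) : Set (Finset V) :=
  {e | ∃ u v : V, G.Adj u v ∧ e = {u, v}}

namespace UKaux

variable {G : SimpleGraph V}

/-- Independent set of vertices. -/
def Indep (G : SimpleGraph V) (S : Finset V) : Prop :=
  ∀ a ∈ S, ∀ b ∈ S, ¬ G.Adj a b

lemma phiB_iff (𝓑 : Set (Finset V)) (x : V → Bool) :
    PhiB 𝓑 x = true ↔ ∀ B ∈ 𝓑, (∀ u ∈ B, x u = true) → ∀ v : V, x v = true := by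
  simp [PhiB]

lemma isKey_mono {h : (V → Bool) → Bool} {K K' : Finset V} (hK : IsKey h K) (hKK : K ⊆ K') :
    IsKey h K' := by
  intro v hv x hx hxK'
  exact hK v (fun hvK => hv (hKK hvK)) x hx (fun a ha => hxK' a (hKK ha))

lemma exists_minKey (h : (V → Bool) → Bool) {K : Finset V} (hK : IsKey h K) :
    ∃ K' ∈ minKeys h, K' ⊆ K := by
  obtain ⟨M, hM, hMmin⟩ : ∃ M ∈ (Finset.univ : Finset (Finset V)).filter
      (fun K' => IsKey h K' ∧ K' ⊆ K), ∀ x ∈ (Finset.univ : Finset (Finset V)).filter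
      (fun K' => IsKey h K' ∧ K' ⊆ K), ¬ x < M := by
    obtain ⟨M, hM⟩ := Finset.exists_minimal
      (s := (Finset.univ : Finset (Finset V)).filter (fun K' => IsKey h K' ∧ K' ⊆ K))
      ⟨K, by simp [hK]⟩
    exact ⟨M, hM.prop, fun x hx hlt => lt_irrefl _ (lt_of_lt_of_le hlt (hM.2 hx hlt.le))⟩
  simp only [Finset.mem_filter, Finset.mem_univ, true_and] at hM hMmin
  refine ⟨M, ⟨hM.1, ?_⟩, hM.2⟩
  intro K' hK' hK'M
  by_contra hne
  exact hMmin K' ⟨hK', hK'M.trans hM.2⟩ (lt_of_le_of_ne hK'M hne)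

lemma minKeys_eq (h : (V → Bool) → Bool)
    (hkey : ∀ K : Finset V, IsKey h K ↔ ∃ u v : V, G.Adj u v ∧ u ∈ K ∧ v ∈ K) :
    minKeys h = edgeFam G := by
  ext K
  constructor
  · rintro ⟨hK, hmin⟩
    obtain ⟨u, v, huv, hu, hv⟩ := (hkey K).1 hK
    have hedge : IsKey h {u, v} := (hkey _).2 ⟨u, v, huv, by simp, by simp⟩
    have hsub : ({u, v} : Finset V) ⊆ K := by
      intro a ha
      simp only [Finset.mem_insert, Finset.mem_singleton] at ha
      rcases ha with rfl | rfl <;> assumption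
    have := hmin _ hedge hsub
    exact ⟨u, v, huv, this.symm⟩
  · rintro ⟨u, v, huv, rfl⟩
    have hcard : ({u, v} : Finset V).card = 2 := by
      rw [Finset.card_insert_of_notMem (by simp [huv.ne]), Finset.card_singleton]
    refine ⟨(hkey _).2 ⟨u, v, huv, by simp, by simp⟩, ?_⟩
    intro K' hK' hsub
    obtain ⟨u', v', hu'v', hu', hv'⟩ := (hkey K').1 hK'
    have h2 : ({u', v'} : Finset V) ⊆ K' := by
      intro a ha
      simp only [Finset.mem_insert, Finset.mem_singleton] at ha
      rcases ha with rfl | rfl <;> assumption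
    have hcard' : ({u', v'} : Finset V).card = 2 := by
      rw [Finset.card_insert_of_notMem (by simp [hu'v'.ne]), Finset.card_singleton]
    apply Finset.eq_of_subset_of_card_le hsub
    calc ({u, v} : Finset V).card = 2 := hcard
      _ = ({u', v'} : Finset V).card := hcard'.symm
      _ ≤ K'.card := Finset.card_le_card h2

lemma isKey_phiB (hedge : ∃ u v : V, G.Adj u v) (K : Finset V) :
    IsKey (PhiB (edgeFam G)) K ↔ ∃ u v : V, G.Adj u v ∧ u ∈ K ∧ v ∈ K := by
  constructor
  · intro hK
    by_contra hno
    push_neg at hno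
    -- x = indicator of K is true for PhiB
    set x : V → Bool := fun a => decide (a ∈ K) with hx
    have hxtrue : PhiB (edgeFam G) x = true := by
      rw [phiB_iff]
      rintro B ⟨u, v, huv, rfl⟩ hB
      exfalso
      have hu : u ∈ K := by simpa [hx] using hB u (by simp)
      have hv : v ∈ K := by simpa [hx] using hB v (by simp)
      exact hno u v huv hu hv
    -- K ≠ univ
    have hKne : K ≠ Finset.univ := by
      rintro rfl
      obtain ⟨u, v, huv⟩ := hedge
      exact hno u v huv (Finset.mem_univ u) (Finset.mem_univ v)
    obtain ⟨w, hw⟩ : ∃ w, w ∉ K := by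
      by_contra hall
      push_neg at hall
      exact hKne (Finset.eq_univ_iff_forall.2 hall)
    have := hK w hw x hxtrue (fun a ha => by simp [hx, ha])
    simp [hx, hw] at this
  · rintro ⟨u, v, huv, hu, hv⟩
    intro w hw z hz hzK
    rw [phiB_iff] at hz
    exact hz {u, v} ⟨u, v, huv, rfl⟩ (fun a ha => by
      simp only [Finset.mem_insert, Finset.mem_singleton] at ha
      rcases ha with rfl | rfl
      · exact hzK a hu
      · exact hzK a hv) w

/-- Horn functions are true on meets of finitely many true points. -/
lemma horn_meet {h : (V → Bool) → Bool} (hh : PureHorn h) (Z : Finset (V → Bool))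
    (hne : Z.Nonempty) (hz : ∀ z ∈ Z, h z = true) :
    h (fun v => decide (∀ z ∈ Z, z v = true)) = true := by
  induction hne using Finset.Nonempty.cons_induction with
  | singleton z =>
    have : (fun v => decide (∀ z' ∈ ({z} : Finset (V → Bool)), z' v = true)) = z := by
      funext v
      simp
    rw [this]
    exact hz z (by simp)
  | cons a Z ha hZne ih =>
    have hZ : ∀ z ∈ Z, h z = true := fun z hzZ => hz z (by
      simp [Finset.mem_cons, hzZ])
    have ihZ := ih hZ
    have haT : h a = true := hz a (by simp)
    have := hh.2 a _ haT ihZ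
    have heq : (fun v => a v && decide (∀ z ∈ Z, z v = true))
        = (fun v => decide (∀ z ∈ Finset.cons a Z ha, z v = true)) := by
      funext v
      by_cases hav : a v = true <;> by_cases hZv : ∀ z ∈ Z, z v = true <;>
        simp [Finset.mem_cons, hav, hZv]
    rwa [heq] at this


lemma unique_of_matching (hm : ∀ v : V, ∃! u : V, G.Adj v u)
    (h : (V → Bool) → Bool) (hh : PureHorn h) (hk : minKeys h = edgeFam G) :
    h = PhiB (edgeFam G) := by
  -- characterization of keys of h
  have keyh : ∀ K : Finset V, IsKey h K ↔ ∃ u v : V, G.Adj u v ∧ u ∈ K ∧ v ∈ K := by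
    intro K
    constructor
    · intro hK
      obtain ⟨K', hK', hsub⟩ := exists_minKey h hK
      rw [hk] at hK'
      obtain ⟨u, v, huv, rfl⟩ := hK'
      exact ⟨u, v, huv, hsub (by simp), hsub (by simp)⟩
    · rintro ⟨u, v, huv, hu, hv⟩
      have hedge : ({u, v} : Finset V) ∈ minKeys h := by
        rw [hk]; exact ⟨u, v, huv, rfl⟩
      refine isKey_mono hedge.1 ?_
      intro a ha
      simp only [Finset.mem_insert, Finset.mem_singleton] at ha
      rcases ha with rfl | rfl <;> assumption
  funext x
  rw [Bool.eq_iff_iff, phiB_iff]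
  constructor
  · -- h x = true → PhiB x = true
    intro hx B hB hxB v
    obtain ⟨u, u', huu', rfl⟩ := hB
    have hkeyB : IsKey h {u, u'} := (keyh _).2 ⟨u, u', huu', by simp, by simp⟩
    by_cases hv : v ∈ ({u, u'} : Finset V)
    · exact hxB v hv
    · exact hkeyB v hv x hx hxB
  · intro hphi
    by_cases hall : ∀ v, x v = true
    · have : x = (fun _ => true) := funext hall
      rw [this]; exact hh.1
    -- x is independent
    have hind : ∀ u v : V, G.Adj u v → ¬(x u = true ∧ x v = true) := by
      rintro u v huv ⟨hu, hv⟩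
      apply hall
      intro w
      exact hphi {u, v} ⟨u, v, huv, rfl⟩ (fun a ha => by
        simp only [Finset.mem_insert, Finset.mem_singleton] at ha
        rcases ha with rfl | rfl <;> assumption) w
    -- the meet y of all true points above x
    set Z : Finset (V → Bool) :=
      Finset.univ.filter (fun z => h z = true ∧ ∀ a, x a = true → z a = true) with hZdef
    have hZne : Z.Nonempty := ⟨fun _ => true, by simp [hZdef, hh.1]⟩
    set y : V → Bool := fun v => decide (∀ z ∈ Z, z v = true) with hydef
    have hy : h y = true := horn_meet hh Z hZne (fun z hz => by
      simp only [hZdef, Finset.mem_filter] at hz; exact hz.2.1)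
    have hymem : ∀ v, y v = true ↔
        ∀ z : V → Bool, h z = true → (∀ a, x a = true → z a = true) → z v = true := by
      intro v
      simp [hydef, hZdef]
    have hxy : ∀ a, x a = true → y a = true := by
      intro a ha
      rw [hymem]
      intro z _ hz
      exact hz a ha
    -- support of y is independent
    have hyind : ∀ u v : V, G.Adj u v → ¬(y u = true ∧ y v = true) := by
      rintro u v huv ⟨hu, hv⟩
      -- then y is all-true, hence the support of x is a key
      have hytop : ∀ w, y w = true := by
        intro w
        rw [hymem]
        intro z hz hzx
        have hzu : z u = true := (hymem u).1 hu z hz hzx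
        have hzv : z v = true := (hymem v).1 hv z hz hzx
        have hkeyuv : IsKey h {u, v} := (keyh _).2 ⟨u, v, huv, by simp, by simp⟩
        by_cases hw : w ∈ ({u, v} : Finset V)
        · simp only [Finset.mem_insert, Finset.mem_singleton] at hw
          rcases hw with rfl | rfl <;> assumption
        · exact hkeyuv w hw z hz (fun a ha => by
            simp only [Finset.mem_insert, Finset.mem_singleton] at ha
            rcases ha with rfl | rfl <;> assumption)
      -- so S := supp x is a key of h, hence contains an edge: contradiction
      have hSkey : IsKey h (Finset.univ.filter (fun a => x a = true)) := by
        intro w _ z hz hzS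
        exact (hymem w).1 (hytop w) z hz (fun a ha => hzS a (by simp [ha]))
      obtain ⟨u', v', hu'v', hu', hv'⟩ := (keyh _).1 hSkey
      simp only [Finset.mem_filter, Finset.mem_univ, true_and] at hu' hv'
      exact hind u' v' hu'v' ⟨hu', hv'⟩
    -- main claim: y = x
    have hyx : ∀ v, y v = true → x v = true := by
      intro v hyv
      by_contra hxv
      -- matching partner of v
      obtain ⟨u, huv, huniq⟩ := hm v
      have hyu : y u = false := by
        by_contra hyu
        rw [Bool.not_eq_false] at hyu
        exact hyind v u huv ⟨hyv, hyu⟩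
      -- K₀ = insert u (supp x) is a key of h
      set S : Finset V := Finset.univ.filter (fun a => x a = true) with hSdef
      have hK₀ : IsKey h (insert u S) := by
        intro c _ z hz hzK
        have hzx : ∀ a, x a = true → z a = true := by
          intro a ha
          exact hzK a (by simp [hSdef, Finset.mem_insert, ha])
        have hzv : z v = true := (hymem v).1 hyv z hz hzx
        have hzu : z u = true := hzK u (Finset.mem_insert_self u S)
        have hkeyuv : IsKey h {v, u} := (keyh _).2 ⟨v, u, huv, by simp, by simp⟩
        by_cases hc : c ∈ ({v, u} : Finset V)
        · simp only [Finset.mem_insert, Finset.mem_singleton] at hc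
          rcases hc with rfl | rfl <;> assumption
        · exact hkeyuv c hc z hz (fun a ha => by
            simp only [Finset.mem_insert, Finset.mem_singleton] at ha
            rcases ha with rfl | rfl <;> assumption)
      obtain ⟨a, b, hab, haK, hbK⟩ := (keyh _).1 hK₀
      simp only [Finset.mem_insert, hSdef, Finset.mem_filter, Finset.mem_univ, true_and]
        at haK hbK
      -- neighbors of u are only v (matching at u)
      obtain ⟨t, hut, htuniq⟩ := hm u
      have hvt : v = t := htuniq v huv.symm
      rcases haK with haK | hax
      · rcases hbK with hbK | hbx
        · rw [haK, hbK] at hab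
          exact G.irrefl hab
        · rw [haK] at hab
          have hbt : b = t := htuniq b hab
          rw [← hvt] at hbt
          subst hbt
          exact hxv hbx
      · rcases hbK with hbK | hbx
        · rw [hbK] at hab
          have hat : a = t := htuniq a hab.symm
          rw [← hvt] at hat
          subst hat
          exact hxv hax
        · exact hind a b hab ⟨hax, hbx⟩
    have hxyeq : x = y := by
      funext v
      cases hxv : x v with
      | true => exact (hxy v hxv).symm
      | false =>
        cases hyv : y v with
        | true => rw [hyx v hyv] at hxv; exact absurd hxv (by simp)
        | false => rfl
    rw [hxyeq]
    exact hy

def MaxIndep (G : SimpleGraph V) (M : Finset V) : Prop :=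
  Indep G M ∧ ∀ u ∉ M, ¬ Indep G (insert u M)

lemma exists_maxIndep_superset {S : Finset V} (hS : Indep G S) :
    ∃ M : Finset V, MaxIndep G M ∧ S ⊆ M := by
  obtain ⟨M, hM, hMmax⟩ : ∃ M ∈ (Finset.univ : Finset (Finset V)).filter
      (fun M => Indep G M ∧ S ⊆ M), ∀ x ∈ (Finset.univ : Finset (Finset V)).filter
      (fun M => Indep G M ∧ S ⊆ M), ¬ M < x := by
    obtain ⟨M, hM⟩ := Finset.exists_maximal
      (s := (Finset.univ : Finset (Finset V)).filter (fun M => Indep G M ∧ S ⊆ M))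
      ⟨S, by simp [hS]⟩
    exact ⟨M, hM.prop, fun x hx hlt => lt_irrefl _ (lt_of_lt_of_le hlt (hM.2 hx hlt.le))⟩
  simp only [Finset.mem_filter, Finset.mem_univ, true_and] at hM hMmax
  refine ⟨M, ⟨hM.1, ?_⟩, hM.2⟩
  intro u hu hind
  exact hMmax (insert u M) ⟨hind, hM.2.trans (Finset.subset_insert u M)⟩
    (Finset.ssubset_insert hu)

/-- The alternative pure Horn function: true points are the intersections of
maximal independent sets, together with the all-true point. -/
noncomputable def hC (G : SimpleGraph V) : (V → Bool) → Bool :=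
  fun x => decide (∀ v : V, x v = false →
    ∃ M : Finset V, MaxIndep G M ∧ (∀ a, x a = true → a ∈ M) ∧ v ∉ M)

lemma hC_iff (x : V → Bool) : hC G x = true ↔ ∀ v : V, x v = false →
    ∃ M : Finset V, MaxIndep G M ∧ (∀ a, x a = true → a ∈ M) ∧ v ∉ M := by
  simp [hC]

lemma pureHorn_hC : PureHorn (hC G) := by
  constructor
  · rw [hC_iff]
    intro v hv
    simp at hv
  · intro x y hx hy
    rw [hC_iff] at hx hy ⊢
    intro v hv
    rcases Bool.and_eq_false_iff.mp hv with hxv | hyv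
    · obtain ⟨M, hM, hsupp, hvM⟩ := hx v hxv
      exact ⟨M, hM, fun a ha => hsupp a (Bool.and_eq_true_iff.mp ha).1, hvM⟩
    · obtain ⟨M, hM, hsupp, hvM⟩ := hy v hyv
      exact ⟨M, hM, fun a ha => hsupp a (Bool.and_eq_true_iff.mp ha).2, hvM⟩

lemma univ_not_indep (hedge : ∃ u v : V, G.Adj u v) : ¬ Indep G (Finset.univ : Finset V) := by
  obtain ⟨u, v, huv⟩ := hedge
  intro hind
  exact hind u (Finset.mem_univ u) v (Finset.mem_univ v) huv

lemma isKey_hC (hedge : ∃ u v : V, G.Adj u v) (K : Finset V) :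
    IsKey (hC G) K ↔ ∃ u v : V, G.Adj u v ∧ u ∈ K ∧ v ∈ K := by
  constructor
  · intro hK
    by_contra hno
    push_neg at hno
    have hKind : Indep G K := fun a ha b hb hab => hno a b hab ha hb
    set T : Finset V :=
      Finset.univ.filter (fun t => ∀ M : Finset V, MaxIndep G M → K ⊆ M → t ∈ M) with hTdef
    set z : V → Bool := fun t => decide (t ∈ T) with hzdef
    have hzC : hC G z = true := by
      rw [hC_iff]
      intro v hv
      have hvT : v ∉ T := by
        intro hvT
        simp [hzdef, hvT] at hv
      simp only [hTdef, Finset.mem_filter, Finset.mem_univ, true_and, not_forall] at hvT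
      obtain ⟨M, hM, hKM, hvM⟩ := hvT
      refine ⟨M, hM, ?_, hvM⟩
      intro a ha
      have haT : a ∈ T := by
        by_contra haT
        simp [hzdef, haT] at ha
      simp only [hTdef, Finset.mem_filter, Finset.mem_univ, true_and] at haT
      exact haT M hM hKM
    have hKT : K ⊆ T := by
      intro a ha
      simp only [hTdef, Finset.mem_filter, Finset.mem_univ, true_and]
      intro M _ hKM
      exact hKM ha
    obtain ⟨M, hM, hKM⟩ := exists_maxIndep_superset hKind
    have hMne : M ≠ Finset.univ := by
      rintro rfl
      exact univ_not_indep hedge hM.1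
    obtain ⟨c, hc⟩ : ∃ c, c ∉ M := by
      by_contra hall
      push_neg at hall
      exact hMne (Finset.eq_univ_iff_forall.2 hall)
    have hcT : c ∉ T := by
      simp only [hTdef, Finset.mem_filter, Finset.mem_univ, true_and, not_forall]
      exact ⟨M, hM, hKM, hc⟩
    have hcK : c ∉ K := fun h => hcT (hKT h)
    have := hK c hcK z hzC (fun a ha => by simp [hzdef, hKT ha])
    simp [hzdef, hcT] at this
  · rintro ⟨u, v, huv, hu, hv⟩
    intro w hw z hz hzK
    by_contra hzw
    rw [Bool.not_eq_true] at hzw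
    rw [hC_iff] at hz
    obtain ⟨M, hM, hsupp, _⟩ := hz w hzw
    exact hM.1 u (hsupp u (hzK u hu)) v (hsupp v (hzK v hv)) huv

/-- If there is an independent set `S₀` and a vertex `v` outside it such that no neighbor of
`v` is in `S₀` but every neighbor of `v` has a neighbor in `S₀`, then `hC G ≠ PhiB`. -/
lemma hC_ne_phiB {S₀ : Finset V} {v : V} (hS₀ : Indep G S₀) (hv : v ∉ S₀)
    (hnb : ∀ u, G.Adj v u → u ∉ S₀) (hforced : ∀ u, G.Adj v u → ∃ s ∈ S₀, G.Adj u s) :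
    hC G ≠ PhiB (edgeFam G) := by
  intro heq
  set x : V → Bool := fun a => decide (a ∈ S₀) with hxdef
  have hphi : PhiB (edgeFam G) x = true := by
    rw [phiB_iff]
    rintro B ⟨a, b, hab, rfl⟩ hB
    exfalso
    have ha : a ∈ S₀ := by simpa [hxdef] using hB a (by simp)
    have hb : b ∈ S₀ := by simpa [hxdef] using hB b (by simp)
    exact hS₀ a ha b hb hab
  have hCx : hC G x = false := by
    rw [Bool.eq_false_iff, Ne, hC_iff]
    intro hC'
    obtain ⟨M, hM, hsupp, hvM⟩ := hC' v (by simp [hxdef, hv])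
    -- every maximal independent superset of S₀ contains v
    have hS₀M : S₀ ⊆ M := fun a ha => hsupp a (by simp [hxdef, ha])
    -- v ∉ M: maximality gives a neighbor u of v in M
    have := hM.2 v hvM
    rw [Indep] at this
    push_neg at this
    obtain ⟨a, ha, b, hb, hab⟩ := this
    simp only [Finset.mem_insert] at ha hb
    have hu : ∃ u ∈ M, G.Adj v u := by
      rcases ha with rfl | haM
      · rcases hb with rfl | hbM
        · exact absurd hab G.irrefl
        · exact ⟨b, hbM, hab⟩
      · rcases hb with rfl | hbM
        · exact ⟨a, haM, hab.symm⟩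
        · exact absurd hab (hM.1 a haM b hbM)
    obtain ⟨u, huM, hvu⟩ := hu
    obtain ⟨s, hs, hus⟩ := hforced u hvu
    exact hM.1 u huM s (hS₀M hs) hus
  rw [heq, hphi] at hCx
  exact absurd hCx (by simp)

/-- Graph lemma: bipartite + no isolated vertices + a vertex of degree ≥ 2 produce the
configuration needed for `hC_ne_phiB`. -/
lemma exists_bad_aux {A : Set V} (h1 : ∀ u ∈ A, ∀ v ∈ A, ¬ G.Adj u v)
    (h2 : ∀ u ∉ A, ∀ v ∉ A, ¬ G.Adj u v) {w : V} (hw : w ∈ A)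
    (hdeg : ∀ u, G.Adj w u → ∃ t, G.Adj u t ∧ t ≠ w) (hwadj : ∃ u, G.Adj w u) :
    ∃ (S₀ : Finset V) (v : V), Indep G S₀ ∧ v ∉ S₀ ∧
      (∀ u, G.Adj v u → u ∉ S₀) ∧ (∀ u, G.Adj v u → ∃ s ∈ S₀, G.Adj u s) := by
  refine ⟨Finset.univ.filter (fun a => a ∈ A ∧ a ≠ w), w, ?_, ?_, ?_, ?_⟩
  · intro a ha b hb
    simp only [Finset.mem_filter, Finset.mem_univ, true_and] at ha hb
    exact h1 a ha.1 b hb.1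
  · simp
  · intro u hu
    simp only [Finset.mem_filter, Finset.mem_univ, true_and, not_and]
    intro huA
    exact absurd hu (h1 w hw u huA)
  · intro u hu
    obtain ⟨t, hut, htw⟩ := hdeg u hu
    have huA : u ∉ A := fun huA => h1 w hw u huA hu
    have htA : t ∈ A := by
      by_contra htA
      exact h2 u huA t htA hut
    exact ⟨t, by simp [htA, htw], hut⟩

lemma exists_bad (hbip : ∃ A : Set V,
      (∀ u ∈ A, ∀ v ∈ A, ¬ G.Adj u v) ∧ (∀ u ∉ A, ∀ v ∉ A, ¬ G.Adj u v))
    {w u1 u2 : V} (h1 : G.Adj w u1) (h2 : G.Adj w u2) (h12 : u1 ≠ u2) :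
    ∃ (S₀ : Finset V) (v : V), Indep G S₀ ∧ v ∉ S₀ ∧
      (∀ u, G.Adj v u → u ∉ S₀) ∧ (∀ u, G.Adj v u → ∃ s ∈ S₀, G.Adj u s) := by
  by_cases hb : ∃ u0, G.Adj w u0 ∧ ∀ t, G.Adj u0 t → t = w
  · obtain ⟨u0, hwu0, hu0⟩ := hb
    -- pick a neighbor of w different from u0
    obtain ⟨u', hwu', hu'ne⟩ : ∃ u', G.Adj w u' ∧ u' ≠ u0 := by
      by_cases h : u1 = u0
      · exact ⟨u2, h2, fun hh => h12 (h.trans hh.symm)⟩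
      · exact ⟨u1, h1, h⟩
    refine ⟨{u'}, u0, ?_, ?_, ?_, ?_⟩
    · intro a ha b hb
      simp only [Finset.mem_singleton] at ha hb
      subst ha; subst hb
      exact G.irrefl
    · simp [Ne.symm hu'ne]
    · intro u hu
      have : u = w := hu0 u hu
      subst this
      simp only [Finset.mem_singleton]
      exact fun h => G.irrefl (h ▸ hwu')
    · intro u hu
      have : u = w := hu0 u hu
      subst this
      exact ⟨u', by simp, hwu'⟩
  · push_neg at hb
    obtain ⟨A, hA1, hA2⟩ := hbip
    have hdeg : ∀ u, G.Adj w u → ∃ t, G.Adj u t ∧ t ≠ w := by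
      intro u hu
      obtain ⟨t, htu, htw⟩ := hb u hu
      exact ⟨t, htu, htw⟩
    by_cases hw : w ∈ A
    · exact exists_bad_aux hA1 hA2 hw hdeg ⟨u1, h1⟩
    · exact exists_bad_aux (fun u hu v hv => hA2 u hu v hv)
        (fun u hu v hv => hA1 u (not_not.mp hu) v (not_not.mp hv)) hw hdeg ⟨u1, h1⟩

end UKaux

/-- A bipartite graph without isolated vertices is a unique key graph iff its edge set is a
perfect matching, i.e. every vertex has degree exactly one. -/
theorem stmt9 [Nonempty V] (G : SimpleGraph V)
    (hbip : ∃ A : Set V,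
      (∀ u ∈ A, ∀ v ∈ A, ¬ G.Adj u v) ∧ (∀ u ∉ A, ∀ v ∉ A, ¬ G.Adj u v))
    (hiso : ∀ v : V, ∃ u : V, G.Adj v u) :
    UniqueKeyHypergraph (edgeFam G) ↔ ∀ v : V, ∃! u : V, G.Adj v u := by
  have hedge : ∃ u v : V, G.Adj u v := by
    obtain ⟨u, hu⟩ := hiso (Classical.arbitrary V)
    exact ⟨_, u, hu⟩
  constructor
  · intro hUK
    by_contra hnm
    push_neg at hnm
    obtain ⟨w, hw⟩ := hnm
    obtain ⟨u1, hu1⟩ := hiso w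
    have : ∃ u2, G.Adj w u2 ∧ u2 ≠ u1 := by
      by_contra hno
      push_neg at hno
      exact hw ⟨u1, hu1, fun y hy => hno y hy⟩
    obtain ⟨u2, hu2, hne⟩ := this
    obtain ⟨S₀, v, hS₀, hv, hnb, hforced⟩ :=
      UKaux.exists_bad hbip hu1 hu2 (Ne.symm hne)
    exact UKaux.hC_ne_phiB hS₀ hv hnb hforced
      (hUK.2 (UKaux.hC G) UKaux.pureHorn_hC
        (UKaux.minKeys_eq (UKaux.hC G) (UKaux.isKey_hC hedge)))
  · intro hm
    constructor
    · exact UKaux.minKeys_eq _ (UKaux.isKey_phiB hedge)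
    · exact fun h hh hk => UKaux.unique_of_matching hm h hh hk
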